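/- Proposition A.2: let W : 𝕋^d → ℝ be continuous with W(−x) = W(x), given by the uniformly convergent cosine series W(x) = Σ_{k∈ℤ^d} a_k cos(2π k·x) with a_k = a_{−k}, a_0 = 0 (mean zero), and Σ_k |a_k| < ∞. Then the Haar probability measure on 𝕋^d is a global minimizer of the pairwise energy E over probability measures if and only if a_k ≥ 0 for all k ∈ ℤ^d. -/

import Mathlib

open MeasureTheory Real
open scoped ENNReal

theorem cos2pi_periodic : Function.Periodic (fun t : ℝ => Real.cos (2 * Real.pi * t)) 1 := by
  intro x; simp [mul_add, Real.cos_add_two_pi]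

theorem sin2pi_periodic : Function.Periodic (fun t : ℝ => Real.sin (2 * Real.pi * t)) 1 := by
  intro x; simp [mul_add, Real.sin_add_two_pi]

/-- The function `x ↦ cos (2π x)` on the circle `ℝ/ℤ`. -/
noncomputable def cosA : AddCircle (1 : ℝ) → ℝ := cos2pi_periodic.lift

/-- The function `x ↦ sin (2π x)` on the circle `ℝ/ℤ`. -/
noncomputable def sinA : AddCircle (1 : ℝ) → ℝ := sin2pi_periodic.lift

lemma cosA_coe (t : ℝ) : cosA (t : AddCircle (1:ℝ)) = Real.cos (2 * π * t) :=
  cos2pi_periodic.lift_coe t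

lemma sinA_coe (t : ℝ) : sinA (t : AddCircle (1:ℝ)) = Real.sin (2 * π * t) :=
  sin2pi_periodic.lift_coe t

lemma continuous_cosA : Continuous cosA := by
  rw [(QuotientAddGroup.isQuotientMap_mk _).continuous_iff]
  exact (Real.continuous_cos.comp (continuous_const.mul continuous_id))

lemma continuous_sinA : Continuous sinA := by
  rw [(QuotientAddGroup.isQuotientMap_mk _).continuous_iff]
  exact (Real.continuous_sin.comp (continuous_const.mul continuous_id))

lemma abs_cosA_le (u : AddCircle (1:ℝ)) : |cosA u| ≤ 1 := by
  induction u using QuotientAddGroup.induction_on with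
  | H t => rw [cosA_coe]; exact Real.abs_cos_le_one _

lemma abs_sinA_le (u : AddCircle (1:ℝ)) : |sinA u| ≤ 1 := by
  induction u using QuotientAddGroup.induction_on with
  | H t => rw [sinA_coe]; exact Real.abs_sin_le_one _

lemma cosA_zero : cosA 0 = 1 := by
  rw [show (0 : AddCircle (1:ℝ)) = ((0:ℝ) : AddCircle (1:ℝ)) by norm_cast, cosA_coe]; simp

lemma sinA_zero : sinA 0 = 0 := by
  rw [show (0 : AddCircle (1:ℝ)) = ((0:ℝ) : AddCircle (1:ℝ)) by norm_cast, sinA_coe]; simp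

lemma cosA_add (u v : AddCircle (1:ℝ)) :
    cosA (u + v) = cosA u * cosA v - sinA u * sinA v := by
  induction u using QuotientAddGroup.induction_on with
  | H s =>
    induction v using QuotientAddGroup.induction_on with
    | H t =>
      rw [← QuotientAddGroup.mk_add, cosA_coe, cosA_coe, cosA_coe, sinA_coe, sinA_coe,
        mul_add, Real.cos_add]

lemma sinA_add (u v : AddCircle (1:ℝ)) :
    sinA (u + v) = sinA u * cosA v + cosA u * sinA v := by
  induction u using QuotientAddGroup.induction_on with
  | H s =>
    induction v using QuotientAddGroup.induction_on with
    | H t =>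
      rw [← QuotientAddGroup.mk_add, cosA_coe, cosA_coe, sinA_coe, sinA_coe, sinA_coe,
        mul_add, Real.sin_add]

lemma cosA_neg (u : AddCircle (1:ℝ)) : cosA (-u) = cosA u := by
  induction u using QuotientAddGroup.induction_on with
  | H t =>
    rw [← QuotientAddGroup.mk_neg, cosA_coe, cosA_coe, mul_neg, Real.cos_neg]

lemma sinA_neg (u : AddCircle (1:ℝ)) : sinA (-u) = -sinA u := by
  induction u using QuotientAddGroup.induction_on with
  | H t =>
    rw [← QuotientAddGroup.mk_neg, sinA_coe, sinA_coe, mul_neg, Real.sin_neg]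

lemma cosA_sub (u v : AddCircle (1:ℝ)) :
    cosA (u - v) = cosA u * cosA v + sinA u * sinA v := by
  rw [sub_eq_add_neg, cosA_add, cosA_neg, sinA_neg]; ring

lemma sinA_sub (u v : AddCircle (1:ℝ)) :
    sinA (u - v) = sinA u * cosA v - cosA u * sinA v := by
  rw [sub_eq_add_neg, sinA_add, cosA_neg, sinA_neg]; ring

/-- The `d`-dimensional torus `𝕋^d = ℝ^d/ℤ^d`, with its Haar probability measure `volume`. -/
abbrev Torus (d : ℕ) := Fin d → AddCircle (1 : ℝ)

/-- `cos (2π k·x)` for `k ∈ ℤ^d` and `x ∈ 𝕋^d`. -/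
noncomputable def tcos {d : ℕ} (k : Fin d → ℤ) (x : Torus d) : ℝ := cosA (∑ i, k i • x i)

/-- `sin (2π k·x)` for `k ∈ ℤ^d` and `x ∈ 𝕋^d`. -/
noncomputable def tsin {d : ℕ} (k : Fin d → ℤ) (x : Torus d) : ℝ := sinA (∑ i, k i • x i)

/-- The pairwise interaction energy `E(ρ) = (1/2) ∫∫ W(x - y) dρ(x) dρ(y)`. -/
noncomputable def energy {d : ℕ} (W : Torus d → ℝ) (ρ : Measure (Torus d)) : ℝ :=
  (1/2) * ∫ x, ∫ y, W (x - y) ∂ρ ∂ρ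

section TorusLemmas
variable {d : ℕ} (k l : Fin d → ℤ) (x y : Torus d)

lemma S_add : (∑ i, (k + l) i • x i) = (∑ i, k i • x i) + ∑ i, l i • x i := by
  rw [← Finset.sum_add_distrib]
  exact Finset.sum_congr rfl fun i _ => by simp [add_zsmul]

lemma S_sub_arg : (∑ i, k i • (x - y) i) = (∑ i, k i • x i) - ∑ i, k i • y i := by
  rw [← Finset.sum_sub_distrib]
  exact Finset.sum_congr rfl fun i _ => by simp [zsmul_sub]

lemma S_neg : (∑ i, (-k) i • x i) = -∑ i, k i • x i := by
  rw [← Finset.sum_neg_distrib]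
  exact Finset.sum_congr rfl fun i _ => by simp [neg_zsmul]

lemma tcos_zero : tcos (0 : Fin d → ℤ) x = 1 := by simp [tcos, cosA_zero]
lemma tsin_zero' : tsin (0 : Fin d → ℤ) x = 0 := by simp [tsin, sinA_zero]

lemma abs_tcos_le : |tcos k x| ≤ 1 := abs_cosA_le _
lemma abs_tsin_le : |tsin k x| ≤ 1 := abs_sinA_le _

lemma continuous_tcos : Continuous (tcos k) :=
  continuous_cosA.comp (continuous_finset_sum _ fun i _ =>
    (continuous_zsmul (k i)).comp (continuous_apply i))

lemma continuous_tsin : Continuous (tsin k) :=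
  continuous_sinA.comp (continuous_finset_sum _ fun i _ =>
    (continuous_zsmul (k i)).comp (continuous_apply i))

lemma tcos_sub : tcos k (x - y) = tcos k x * tcos k y + tsin k x * tsin k y := by
  rw [tcos, S_sub_arg, cosA_sub]; rfl

lemma tcos_neg : tcos (-k) x = tcos k x := by rw [tcos, S_neg, cosA_neg]; rfl
lemma tsin_neg : tsin (-k) x = -tsin k x := by rw [tsin, S_neg, sinA_neg]; rfl

lemma tcos_mul_tcos : tcos k x * tcos l x = (tcos (k + l) x + tcos (k - l) x) / 2 := by
  have h1 : tcos (k + l) x = tcos k x * tcos l x - tsin k x * tsin l x := by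
    rw [tcos, S_add, cosA_add]; rfl
  have h2 : tcos (k - l) x = tcos k x * tcos l x + tsin k x * tsin l x := by
    rw [show k - l = k + (-l) by ring, tcos, S_add, cosA_add, ← tcos, ← tcos, ← tsin, ← tsin,
      tcos_neg, tsin_neg]
    ring
  rw [h1, h2]; ring

lemma tsin_mul_tcos : tsin k x * tcos l x = (tsin (k + l) x + tsin (k - l) x) / 2 := by
  have h1 : tsin (k + l) x = tsin k x * tcos l x + tcos k x * tsin l x := by
    rw [tsin, S_add, sinA_add]; rfl
  have h2 : tsin (k - l) x = tsin k x * tcos l x - tcos k x * tsin l x := by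
    rw [show k - l = k + (-l) by ring, tsin, S_add, sinA_add, ← tcos, ← tcos, ← tsin, ← tsin,
      tcos_neg, tsin_neg]
    ring
  rw [h1, h2]; ring

end TorusLemmas

section Fourier1

instance : IsProbabilityMeasure (volume : Measure (AddCircle (1:ℝ))) :=
  ⟨UnitAddCircle.measure_univ⟩

lemma fourier1_coe (t : ℝ) :
    fourier 1 ((t : ℝ) : AddCircle (1:ℝ)) = Complex.exp (((2 * π * t : ℝ) : ℂ) * Complex.I) := by
  rw [fourier_coe_apply]
  congr 1
  push_cast
  ring

lemma cosA_eq_re (u : AddCircle (1:ℝ)) : cosA u = (fourier 1 u).re := by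
  induction u using QuotientAddGroup.induction_on with
  | H t => rw [cosA_coe, fourier1_coe, Complex.exp_ofReal_mul_I_re]

lemma sinA_eq_im (u : AddCircle (1:ℝ)) : sinA u = (fourier 1 u).im := by
  induction u using QuotientAddGroup.induction_on with
  | H t => rw [sinA_coe, fourier1_coe, Complex.exp_ofReal_mul_I_im]

lemma fourier1_add (u v : AddCircle (1:ℝ)) :
    fourier 1 (u + v) = fourier 1 u * fourier 1 v := by
  simp only [fourier_one, AddCircle.toCircle_add, Circle.coe_mul]

lemma fourier1_zsmul (n : ℤ) (u : AddCircle (1:ℝ)) : fourier 1 (n • u) = fourier n u := by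
  rw [fourier_one]; exact fourier_apply.symm

lemma fourier1_sum {ι : Type*} (s : Finset ι) (f : ι → AddCircle (1:ℝ)) :
    fourier 1 (∑ i ∈ s, f i) = ∏ i ∈ s, fourier 1 (f i) := by
  classical
  induction s using Finset.cons_induction with
  | empty => simp [fourier_eval_zero]
  | cons i s hi ih => rw [Finset.sum_cons, Finset.prod_cons, fourier1_add, ih]

lemma integral_fourier_unit (n : ℤ) :
    ∫ u : AddCircle (1:ℝ), fourier n u = if n = 0 then 1 else 0 := by
  split_ifs with h
  · subst h
    simp only [fourier_zero]
    simp
  · exact integral_eq_zero_of_add_right_eq_neg (fourier_add_half_inv_index h one_pos)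

end Fourier1

section TorusIntegrals
variable {d : ℕ}

lemma integrable_of_cont {f : Torus d → ℝ} (hf : Continuous f) (ρ : Measure (Torus d))
    [IsFiniteMeasure ρ] : Integrable f ρ :=
  hf.integrable_of_hasCompactSupport (HasCompactSupport.of_compactSpace f)

lemma fourier1_S (k : Fin d → ℤ) (x : Torus d) :
    fourier 1 (∑ i, k i • x i) = ∏ i, fourier (k i) (x i) := by
  rw [fourier1_sum]
  exact Finset.prod_congr rfl fun i _ => fourier1_zsmul _ _

lemma integral_fourier_prod (k : Fin d → ℤ) :
    ∫ x : Torus d, ∏ i, fourier (k i) (x i) = if k = 0 then 1 else 0 := by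
  rw [MeasureTheory.volume_pi, MeasureTheory.integral_fintype_prod_eq_prod (ι := Fin d)
    (f := fun i u => fourier (k i) u)]
  simp_rw [integral_fourier_unit]
  by_cases h : k = 0
  · simp [h]
  · obtain ⟨i, hi⟩ : ∃ i, k i ≠ 0 := by
      by_contra hc
      push_neg at hc
      exact h (funext hc)
    rw [if_neg h]
    exact Finset.prod_eq_zero (Finset.mem_univ i) (by rw [if_neg hi])

lemma integrable_fourier_prod (k : Fin d → ℤ) :
    Integrable (fun x : Torus d => ∏ i, fourier (k i) (x i)) volume := by
  apply Continuous.integrable_of_hasCompactSupport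
  · exact continuous_finset_prod _ fun i _ =>
      (fourier (k i)).continuous.comp (continuous_apply i)
  · exact HasCompactSupport.of_compactSpace _

lemma integral_tcos_volume (k : Fin d → ℤ) :
    ∫ x : Torus d, tcos k x = if k = 0 then 1 else 0 := by
  have h1 : ∀ x : Torus d, tcos k x = (∏ i, fourier (k i) (x i)).re := fun x => by
    rw [tcos, cosA_eq_re, fourier1_S]
  simp_rw [h1]
  rw [show (fun x : Torus d => (∏ i, fourier (k i) (x i)).re)
    = fun x : Torus d => RCLike.re (∏ i, fourier (k i) (x i)) from rfl]
  rw [integral_re (integrable_fourier_prod k), integral_fourier_prod]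
  split_ifs <;> simp

lemma integral_tsin_volume (k : Fin d → ℤ) :
    ∫ x : Torus d, tsin k x = 0 := by
  have h1 : ∀ x : Torus d, tsin k x = (∏ i, fourier (k i) (x i)).im := fun x => by
    rw [tsin, sinA_eq_im, fourier1_S]
  simp_rw [h1]
  rw [show (fun x : Torus d => (∏ i, fourier (k i) (x i)).im)
    = fun x : Torus d => RCLike.im (∏ i, fourier (k i) (x i)) from rfl]
  rw [integral_im (integrable_fourier_prod k), integral_fourier_prod]
  split_ifs <;> simp

end TorusIntegrals

section Expansion
variable {d : ℕ}

lemma summable_nnnorm {a : (Fin d → ℤ) → ℝ} (ha : Summable fun k => |a k|) :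
    Summable fun k => ‖a k‖₊ := by
  rw [← NNReal.summable_coe]
  simpa [Real.norm_eq_abs] using ha

lemma tsum_lintegral_ne_top (ρ : Measure (Torus d)) [IsProbabilityMeasure ρ]
    (f : (Fin d → ℤ) → Torus d → ℝ) (b : (Fin d → ℤ) → ℝ) (hb : Summable b)
    (hb0 : ∀ k, 0 ≤ b k) (hbd : ∀ k x, ‖f k x‖ ≤ b k) :
    ∑' k, ∫⁻ y, ‖f k y‖₊ ∂ρ ≠ ∞ := by
  have h1 : ∀ k, ∫⁻ y, ‖f k y‖₊ ∂ρ ≤ ENNReal.ofReal (b k) := by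
    intro k
    calc ∫⁻ y, ‖f k y‖₊ ∂ρ ≤ ∫⁻ _, ENNReal.ofReal (b k) ∂ρ := by
          apply lintegral_mono
          intro y
          simp only [← enorm_eq_nnnorm, ← ofReal_norm]
          exact ENNReal.ofReal_le_ofReal (hbd k y)
      _ = ENNReal.ofReal (b k) := by simp
  refine ne_top_of_le_ne_top ?_ (ENNReal.tsum_le_tsum h1)
  rw [← ENNReal.ofReal_tsum_of_nonneg hb0 hb]
  exact ENNReal.ofReal_ne_top

lemma energy_eq (W : Torus d → ℝ) (a : (Fin d → ℤ) → ℝ)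
    (ha_sum : Summable fun k : Fin d → ℤ => |a k|)
    (hser : ∀ x, W x = ∑' k : Fin d → ℤ, a k * tcos k x)
    (ρ : Measure (Torus d)) [IsProbabilityMeasure ρ] :
    energy W ρ = (1/2) *
      ∑' k : Fin d → ℤ, a k * ((∫ x, tcos k x ∂ρ)^2 + (∫ x, tsin k x ∂ρ)^2) := by
  set C : (Fin d → ℤ) → ℝ := fun k => ∫ x, tcos k x ∂ρ with hCdef
  set S : (Fin d → ℤ) → ℝ := fun k => ∫ x, tsin k x ∂ρ with hSdef
  have hC1 : ∀ k, |C k| ≤ 1 := by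
    intro k
    have := norm_integral_le_of_norm_le_const (μ := ρ) (f := tcos k) (C := 1)
      (Filter.Eventually.of_forall fun x => by
        rw [Real.norm_eq_abs]; exact abs_tcos_le k x)
    simpa [Real.norm_eq_abs] using this
  have hS1 : ∀ k, |S k| ≤ 1 := by
    intro k
    have := norm_integral_le_of_norm_le_const (μ := ρ) (f := tsin k) (C := 1)
      (Filter.Eventually.of_forall fun x => by
        rw [Real.norm_eq_abs]; exact abs_tsin_le k x)
    simpa [Real.norm_eq_abs] using this
  have inner : ∀ x : Torus d, ∫ y, W (x - y) ∂ρ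
      = ∑' k : Fin d → ℤ, a k * (tcos k x * C k + tsin k x * S k) := by
    intro x
    have h1 : (fun y => W (x - y)) = fun y => ∑' k : Fin d → ℤ, a k * tcos k (x - y) := by
      funext y; exact hser (x - y)
    rw [h1, integral_tsum]
    · apply tsum_congr; intro k
      have h2 : (fun y => a k * tcos k (x - y))
          = fun y => a k * (tcos k x * tcos k y + tsin k x * tsin k y) := by
        funext y; rw [tcos_sub]
      rw [h2]
      rw [integral_const_mul]
      congr 1
      rw [integral_add ((integrable_of_cont (continuous_tcos k) ρ).const_mul _)
        ((integrable_of_cont (continuous_tsin k) ρ).const_mul _),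
        integral_const_mul, integral_const_mul]
    · intro k
      exact (continuous_const.mul ((continuous_tcos k).comp
        (continuous_const.sub continuous_id))).aestronglyMeasurable
    · apply tsum_lintegral_ne_top ρ _ (fun k => |a k|) ha_sum (fun k => abs_nonneg _)
      intro k y
      rw [Real.norm_eq_abs, abs_mul]
      calc |a k| * |tcos k (x - y)| ≤ |a k| * 1 :=
            mul_le_mul_of_nonneg_left (abs_tcos_le _ _) (abs_nonneg _)
        _ = |a k| := mul_one _
  have outer : ∫ x, ∫ y, W (x - y) ∂ρ ∂ρ
      = ∑' k : Fin d → ℤ, a k * (C k ^ 2 + S k ^ 2) := by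
    have h1 : (fun x => ∫ y, W (x - y) ∂ρ)
        = fun x => ∑' k : Fin d → ℤ, a k * (tcos k x * C k + tsin k x * S k) := by
      funext x; exact inner x
    rw [h1, integral_tsum]
    · apply tsum_congr; intro k
      rw [integral_const_mul]
      congr 1
      rw [integral_add ((integrable_of_cont (continuous_tcos k) ρ).mul_const _)
        ((integrable_of_cont (continuous_tsin k) ρ).mul_const _),
        integral_mul_const, integral_mul_const]
      ring
    · intro k
      exact (continuous_const.mul (((continuous_tcos k).mul continuous_const).add
        ((continuous_tsin k).mul continuous_const))).aestronglyMeasurable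
    · apply tsum_lintegral_ne_top ρ _ (fun k => |a k| * 2)
        (ha_sum.mul_right 2) (fun k => by positivity)
      intro k x
      rw [Real.norm_eq_abs, abs_mul]
      apply mul_le_mul_of_nonneg_left _ (abs_nonneg _)
      calc |tcos k x * C k + tsin k x * S k|
          ≤ |tcos k x * C k| + |tsin k x * S k| := abs_add_le _ _
        _ ≤ 1 * 1 + 1 * 1 := by
            rw [abs_mul, abs_mul]
            gcongr
            · exact abs_tcos_le _ _
            · exact hC1 k
            · exact abs_tsin_le _ _
            · exact hS1 k
        _ ≤ 2 := by norm_num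
  rw [energy, outer]

end Expansion

section EnergyVolume
variable {d : ℕ}

instance : IsProbabilityMeasure (volume : Measure (Torus d)) := by
  rw [MeasureTheory.volume_pi]
  infer_instance

lemma energy_volume_zero (W : Torus d → ℝ) (a : (Fin d → ℤ) → ℝ) (ha0 : a 0 = 0)
    (ha_sum : Summable fun k : Fin d → ℤ => |a k|)
    (hser : ∀ x, W x = ∑' k : Fin d → ℤ, a k * tcos k x) :
    energy W (volume : Measure (Torus d)) = 0 := by
  rw [energy_eq W a ha_sum hser volume]
  have h : ∀ k : Fin d → ℤ,
      a k * ((∫ x, tcos k x)^2 + (∫ x, tsin k x)^2) = 0 := by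
    intro k
    rw [integral_tcos_volume, integral_tsin_volume]
    by_cases hk : k = 0
    · subst hk; rw [ha0]; ring
    · rw [if_neg hk]; ring
  rw [tsum_congr h, tsum_zero, mul_zero]

end EnergyVolume

open scoped NNReal

section Perturb
variable {d : ℕ} (k : Fin d → ℤ)

lemma one_add_tcos_nonneg (x : Torus d) : 0 ≤ 1 + tcos k x := by
  have := (abs_le.mp (abs_tcos_le k x)).1
  linarith

noncomputable def pdens (k : Fin d → ℤ) : Torus d → ℝ≥0 :=
  fun x => Real.toNNReal (1 + tcos k x)

lemma pdens_coe (x : Torus d) : ((pdens k x : ℝ≥0) : ℝ) = 1 + tcos k x :=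
  Real.coe_toNNReal _ (one_add_tcos_nonneg k x)

lemma pdens_measurable : Measurable (pdens k) :=
  (continuous_real_toNNReal.comp (continuous_const.add (continuous_tcos k))).measurable

noncomputable def pmeas (k : Fin d → ℤ) : Measure (Torus d) :=
  volume.withDensity fun x => (pdens k x : ℝ≥0∞)

lemma integral_pmeas (g : Torus d → ℝ) :
    ∫ x, g x ∂(pmeas k) = ∫ x, (1 + tcos k x) * g x := by
  rw [pmeas, integral_withDensity_eq_integral_smul (pdens_measurable k) g]
  congr 1; funext x
  rw [NNReal.smul_def, smul_eq_mul, pdens_coe]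

lemma pmeas_prob (hk : k ≠ 0) : IsProbabilityMeasure (pmeas k) := by
  constructor
  rw [pmeas, withDensity_apply _ MeasurableSet.univ, Measure.restrict_univ]
  have h1 : ∀ x : Torus d, ((pdens k x : ℝ≥0) : ℝ≥0∞) = ENNReal.ofReal (1 + tcos k x) :=
    fun x => rfl
  simp_rw [h1]
  rw [← MeasureTheory.ofReal_integral_eq_lintegral_ofReal
    (integrable_of_cont (f := fun x => 1 + tcos k x) (continuous_const.add (continuous_tcos k)) volume)
    (Filter.Eventually.of_forall (one_add_tcos_nonneg k))]
  rw [integral_add (integrable_const 1) (integrable_of_cont (continuous_tcos k) volume),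
    integral_tcos_volume, if_neg hk, integral_const]
  simp

lemma integral_tcos_pmeas (l : Fin d → ℤ) :
    ∫ x, tcos l x ∂(pmeas k) = (if l = 0 then (1:ℝ) else 0)
      + ((if k + l = 0 then (1:ℝ) else 0) + (if k - l = 0 then (1:ℝ) else 0)) / 2 := by
  rw [integral_pmeas]
  have h : (fun x => (1 + tcos k x) * tcos l x)
      = fun x => tcos l x + (tcos (k + l) x + tcos (k - l) x) / 2 := by
    funext x
    have := tcos_mul_tcos k l x
    nlinarith [this]
  rw [h, integral_add (integrable_of_cont (continuous_tcos l) volume)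
      (integrable_of_cont (f := fun x => (tcos (k+l) x + tcos (k-l) x) / 2) (((continuous_tcos (k+l)).add (continuous_tcos (k-l))).div_const 2)
        volume),
    integral_div, integral_add (integrable_of_cont (continuous_tcos (k+l)) volume)
      (integrable_of_cont (continuous_tcos (k-l)) volume),
    integral_tcos_volume, integral_tcos_volume, integral_tcos_volume]

lemma integral_tsin_pmeas (l : Fin d → ℤ) :
    ∫ x, tsin l x ∂(pmeas k) = 0 := by
  rw [integral_pmeas]
  have h : (fun x => (1 + tcos k x) * tsin l x)
      = fun x => tsin l x + (tsin (l + k) x + tsin (l - k) x) / 2 := by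
    funext x
    have := tsin_mul_tcos l k x
    nlinarith [this]
  rw [h, integral_add (integrable_of_cont (continuous_tsin l) volume)
      (integrable_of_cont (f := fun x => (tsin (l+k) x + tsin (l-k) x) / 2) (((continuous_tsin (l+k)).add (continuous_tsin (l-k))).div_const 2)
        volume),
    integral_div, integral_add (integrable_of_cont (continuous_tsin (l+k)) volume)
      (integrable_of_cont (continuous_tsin (l-k)) volume),
    integral_tsin_volume, integral_tsin_volume, integral_tsin_volume]
  norm_num

end Perturb

/-- Proposition A.2: for `W(x) = Σ_k a_k cos(2π k·x)` with `a_k = a_{-k}`, `a_0 = 0` and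
`Σ_k |a_k| < ∞`, the Haar probability measure is a global minimizer of the pairwise energy
over probability measures if and only if `a_k ≥ 0` for all `k`. -/
theorem stmt15 {d : ℕ} (W : Torus d → ℝ) (hWc : Continuous W) (hWsymm : ∀ x, W (-x) = W x)
    (a : (Fin d → ℤ) → ℝ) (ha_symm : ∀ k, a (-k) = a k) (ha0 : a 0 = 0)
    (ha_sum : Summable (fun k : Fin d → ℤ => |a k|))
    (hser : ∀ x, W x = ∑' k : Fin d → ℤ, a k * tcos k x) :
    (∀ ρ : Measure (Torus d), IsProbabilityMeasure ρ →
        energy W (volume : Measure (Torus d)) ≤ energy W ρ)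
      ↔ ∀ k : Fin d → ℤ, 0 ≤ a k := by
  constructor
  · intro h k
    by_cases hk : k = 0
    · subst hk; rw [ha0]
    haveI := pmeas_prob k hk
    have hE := h (pmeas k) inferInstance
    rw [energy_volume_zero W a ha0 ha_sum hser, energy_eq W a ha_sum hser (pmeas k)] at hE
    set g : (Fin d → ℤ) → ℝ :=
      fun l => a l * ((∫ x, tcos l x ∂(pmeas k))^2 + (∫ x, tsin l x ∂(pmeas k))^2) with hg
    have hgl : ∀ l, g l = a l * ((if l = 0 then (1:ℝ) else 0)
        + ((if k + l = 0 then (1:ℝ) else 0) + (if k - l = 0 then (1:ℝ) else 0)) / 2)^2 := by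
      intro l
      rw [hg]
      simp only
      rw [integral_tcos_pmeas, integral_tsin_pmeas]
      ring
    by_cases hkk : k = -k
    · have h2k : k + k = 0 := by nth_rewrite 2 [hkk]; exact add_neg_cancel k
      have hsum : ∑' l, g l = a k := by
        rw [tsum_eq_single k]
        · rw [hgl k, if_neg hk, if_pos h2k, if_pos (sub_self k)]
          ring
        · intro l hl
          rw [hgl l]
          by_cases hl0 : l = 0
          · subst hl0; rw [ha0]; ring
          · rw [if_neg hl0, if_neg (fun hc =>
                hl (by rw [eq_neg_of_add_eq_zero_right hc, ← hkk])),
              if_neg (fun hc => hl (sub_eq_zero.mp hc).symm)]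
            ring
      rw [hsum] at hE
      linarith
    · have hsum : ∑' l, g l = a k / 4 + a k / 4 := by
        rw [tsum_eq_sum (s := {k, -k}) (by
          intro l hl
          simp only [Finset.mem_insert, Finset.mem_singleton] at hl
          push_neg at hl
          rw [hgl l]
          by_cases hl0 : l = 0
          · subst hl0; rw [ha0]; ring
          · rw [if_neg hl0, if_neg (fun hc => hl.2 (eq_neg_of_add_eq_zero_right hc)),
              if_neg (fun hc => hl.1 (sub_eq_zero.mp hc).symm)]
            ring)]
        rw [Finset.sum_pair hkk, hgl k, hgl (-k)]
        rw [if_neg hk, if_neg (fun hc => hkk (eq_neg_of_add_eq_zero_right hc)),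
          if_pos (sub_self k), if_neg (fun hc : -k = 0 => hk (by simpa using hc)),
          if_pos (add_neg_cancel k), if_neg (fun hc => hkk
            (eq_neg_of_add_eq_zero_right (by rwa [sub_neg_eq_add] at hc))),
          ha_symm k]
        ring
      rw [hsum] at hE
      linarith
  · intro ha ρ hρ
    rw [energy_volume_zero W a ha0 ha_sum hser, energy_eq W a ha_sum hser ρ]
    apply mul_nonneg (by norm_num)
    exact tsum_nonneg fun k => mul_nonneg (ha k) (by positivity)
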